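/- For starting sequences of n 2's and 3's with n ≤ 4, the maximal extension length before reaching the first 1 satisfies μ(1)=1, μ(2)=4, μ(3)=5, μ(4)=8. -/

import Mathlib

/-- The curling number of a finite sequence: the largest `k` such that
`S = X ++ Y^k` with `Y` nonempty (where `Y^k` is `k` concatenated copies of `Y`). -/
noncomputable def curl (S : List ℤ) : ℕ :=
  sSup {k | ∃ X Y : List ℤ, Y ≠ [] ∧ S = X ++ (List.replicate k Y).flatten}

/-- One step of the curling extension: append the curling number. -/
noncomputable def curlStep (S : List ℤ) : List ℤ := S ++ [(curl S : ℤ)]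

noncomputable def mu (n : ℕ) : ℕ :=
  sSup {L | ∃ S : List ℤ, S.length = n ∧ (∀ x ∈ S, x = 2 ∨ x = 3) ∧ n ≤ L ∧
    (∀ i, i < L - n → curl (curlStep^[i] S) ≠ 1) ∧ curl (curlStep^[L - n] S) = 1}

lemma rep_suffix {S X Y : List ℤ} {k m : ℕ} (hm : m ≤ k)
    (h : S = X ++ (List.replicate k Y).flatten) :
    (List.replicate m Y).flatten <:+ S := by
  refine ⟨X ++ (List.replicate (k - m) Y).flatten, ?_⟩
  rw [h, List.append_assoc, ← List.flatten_append, ← List.replicate_add]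
  rw [Nat.sub_add_cancel hm]

lemma curl_eq_of (S : List ℤ) (k p : ℕ) (hk : 0 < k) (hp : 0 < p) (hpl : p ≤ S.length)
    (h1 : (List.replicate k (S.drop (S.length - p))).flatten <:+ S)
    (h2 : ∀ p' ∈ Finset.Icc 1 S.length,
      ¬ (List.replicate (k+1) (S.drop (S.length - p'))).flatten <:+ S) :
    curl S = k := by
  have hub : ∀ k' ∈ {k | ∃ X Y : List ℤ, Y ≠ [] ∧ S = X ++ (List.replicate k Y).flatten}, k' ≤ k := by
    rintro k' ⟨X, Y, hY, hS⟩
    by_contra hlt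
    push_neg at hlt
    have hs1 : (List.replicate (k+1) Y).flatten <:+ S := rep_suffix (by omega) hS
    have hsY : Y <:+ S := by
      have := rep_suffix (m := 1) (by omega) hS
      simpa using this
    have hlen : (k+1) * Y.length ≤ S.length := by
      have := hs1.length_le
      simpa [List.length_flatten, List.length_replicate, mul_comm] using this
    have hYlen : 1 ≤ Y.length := by
      cases Y with
      | nil => exact absurd rfl hY
      | cons a t => simp
    have hYd : Y = S.drop (S.length - Y.length) := List.suffix_iff_eq_drop.1 hsY
    refine h2 Y.length (Finset.mem_Icc.2 ⟨hYlen, by nlinarith⟩) ?_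
    rw [← hYd]
    exact hs1
  have hmem : k ∈ {k | ∃ X Y : List ℤ, Y ≠ [] ∧ S = X ++ (List.replicate k Y).flatten} := by
    obtain ⟨X, hX⟩ := h1
    refine ⟨X, S.drop (S.length - p), ?_, hX.symm⟩
    have : (S.drop (S.length - p)).length = p := by
      rw [List.length_drop]; omega
    intro hnil
    rw [hnil] at this
    simp at this
    omega
  have hbdd : BddAbove {k | ∃ X Y : List ℤ, Y ≠ [] ∧ S = X ++ (List.replicate k Y).flatten} :=
    ⟨k, hub⟩
  exact le_antisymm (csSup_le ⟨k, hmem⟩ hub) (le_csSup hbdd hmem)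

lemma sSup_eq_of (A : Set ℕ) (M : ℕ) (hmem : M ∈ A) (hub : ∀ L ∈ A, L ≤ M) : sSup A = M :=
  le_antisymm (csSup_le ⟨M, hmem⟩ hub) (le_csSup ⟨M, hub⟩ hmem)

lemma L_le {n t L : ℕ} {S : List ℤ} (hne : ∀ i, i < L - n → curl (curlStep^[i] S) ≠ 1)
    (h : curl (curlStep^[t] S) = 1) : L ≤ n + t := by
  by_contra hlt
  exact hne t (by omega) h

lemma len_one {S : List ℤ} (h : S.length = 1) : ∃ a, S = [a] :=
  List.length_eq_one_iff.1 h

lemma len_four {S : List ℤ} (h : S.length = 4) : ∃ a b c d, S = [a, b, c, d] := by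
  rcases S with _ | ⟨a, S⟩ <;> simp_all
  rcases S with _ | ⟨b, S⟩ <;> simp_all
  rcases S with _ | ⟨c, S⟩ <;> simp_all [List.length_eq_one_iff]

lemma c_2 : curl [2] = 1 :=
  curl_eq_of _ 1 1 (by norm_num) (by norm_num) (by norm_num) (by decide) (by decide)

lemma c_3 : curl [3] = 1 :=
  curl_eq_of _ 1 1 (by norm_num) (by norm_num) (by norm_num) (by decide) (by decide)

lemma c_2_2 : curl [2, 2] = 2 :=
  curl_eq_of _ 2 1 (by norm_num) (by norm_num) (by norm_num) (by decide) (by decide)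

lemma c_2_2_2 : curl [2, 2, 2] = 3 :=
  curl_eq_of _ 3 1 (by norm_num) (by norm_num) (by norm_num) (by decide) (by decide)

lemma c_2_2_2_3 : curl [2, 2, 2, 3] = 1 :=
  curl_eq_of _ 1 4 (by norm_num) (by norm_num) (by norm_num) (by decide) (by decide)

lemma c_2_3 : curl [2, 3] = 1 :=
  curl_eq_of _ 1 2 (by norm_num) (by norm_num) (by norm_num) (by decide) (by decide)

lemma c_3_2 : curl [3, 2] = 1 :=
  curl_eq_of _ 1 2 (by norm_num) (by norm_num) (by norm_num) (by decide) (by decide)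

lemma c_3_3 : curl [3, 3] = 2 :=
  curl_eq_of _ 2 1 (by norm_num) (by norm_num) (by norm_num) (by decide) (by decide)

lemma c_3_3_2 : curl [3, 3, 2] = 1 :=
  curl_eq_of _ 1 3 (by norm_num) (by norm_num) (by norm_num) (by decide) (by decide)

lemma c_2_2_3 : curl [2, 2, 3] = 1 :=
  curl_eq_of _ 1 3 (by norm_num) (by norm_num) (by norm_num) (by decide) (by decide)

lemma c_2_3_2 : curl [2, 3, 2] = 1 :=
  curl_eq_of _ 1 3 (by norm_num) (by norm_num) (by norm_num) (by decide) (by decide)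

lemma c_2_3_3 : curl [2, 3, 3] = 2 :=
  curl_eq_of _ 2 1 (by norm_num) (by norm_num) (by norm_num) (by decide) (by decide)

lemma c_2_3_3_2 : curl [2, 3, 3, 2] = 1 :=
  curl_eq_of _ 1 4 (by norm_num) (by norm_num) (by norm_num) (by decide) (by decide)

lemma c_3_2_2 : curl [3, 2, 2] = 2 :=
  curl_eq_of _ 2 1 (by norm_num) (by norm_num) (by norm_num) (by decide) (by decide)

lemma c_3_2_2_2 : curl [3, 2, 2, 2] = 3 :=
  curl_eq_of _ 3 1 (by norm_num) (by norm_num) (by norm_num) (by decide) (by decide)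

lemma c_3_2_2_2_3 : curl [3, 2, 2, 2, 3] = 1 :=
  curl_eq_of _ 1 5 (by norm_num) (by norm_num) (by norm_num) (by decide) (by decide)

lemma c_3_2_3 : curl [3, 2, 3] = 1 :=
  curl_eq_of _ 1 3 (by norm_num) (by norm_num) (by norm_num) (by decide) (by decide)

lemma c_3_3_3 : curl [3, 3, 3] = 3 :=
  curl_eq_of _ 3 1 (by norm_num) (by norm_num) (by norm_num) (by decide) (by decide)

lemma c_3_3_3_3 : curl [3, 3, 3, 3] = 4 :=
  curl_eq_of _ 4 1 (by norm_num) (by norm_num) (by norm_num) (by decide) (by decide)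

lemma c_3_3_3_3_4 : curl [3, 3, 3, 3, 4] = 1 :=
  curl_eq_of _ 1 5 (by norm_num) (by norm_num) (by norm_num) (by decide) (by decide)

lemma c_2_2_2_2 : curl [2, 2, 2, 2] = 4 :=
  curl_eq_of _ 4 1 (by norm_num) (by norm_num) (by norm_num) (by decide) (by decide)

lemma c_2_2_2_2_4 : curl [2, 2, 2, 2, 4] = 1 :=
  curl_eq_of _ 1 5 (by norm_num) (by norm_num) (by norm_num) (by decide) (by decide)

lemma c_2_2_3_2 : curl [2, 2, 3, 2] = 1 :=
  curl_eq_of _ 1 4 (by norm_num) (by norm_num) (by norm_num) (by decide) (by decide)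

lemma c_2_2_3_3 : curl [2, 2, 3, 3] = 2 :=
  curl_eq_of _ 2 1 (by norm_num) (by norm_num) (by norm_num) (by decide) (by decide)

lemma c_2_2_3_3_2 : curl [2, 2, 3, 3, 2] = 1 :=
  curl_eq_of _ 1 5 (by norm_num) (by norm_num) (by norm_num) (by decide) (by decide)

lemma c_2_3_2_2 : curl [2, 3, 2, 2] = 2 :=
  curl_eq_of _ 2 1 (by norm_num) (by norm_num) (by norm_num) (by decide) (by decide)

lemma c_2_3_2_2_2 : curl [2, 3, 2, 2, 2] = 3 :=
  curl_eq_of _ 3 1 (by norm_num) (by norm_num) (by norm_num) (by decide) (by decide)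

lemma c_2_3_2_2_2_3 : curl [2, 3, 2, 2, 2, 3] = 1 :=
  curl_eq_of _ 1 6 (by norm_num) (by norm_num) (by norm_num) (by decide) (by decide)

lemma c_2_3_2_3 : curl [2, 3, 2, 3] = 2 :=
  curl_eq_of _ 2 2 (by norm_num) (by norm_num) (by norm_num) (by decide) (by decide)

lemma c_2_3_2_3_2 : curl [2, 3, 2, 3, 2] = 2 :=
  curl_eq_of _ 2 2 (by norm_num) (by norm_num) (by norm_num) (by decide) (by decide)

lemma c_2_3_2_3_2_2 : curl [2, 3, 2, 3, 2, 2] = 2 :=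
  curl_eq_of _ 2 1 (by norm_num) (by norm_num) (by norm_num) (by decide) (by decide)

lemma c_2_3_2_3_2_2_2 : curl [2, 3, 2, 3, 2, 2, 2] = 3 :=
  curl_eq_of _ 3 1 (by norm_num) (by norm_num) (by norm_num) (by decide) (by decide)

lemma c_2_3_2_3_2_2_2_3 : curl [2, 3, 2, 3, 2, 2, 2, 3] = 1 :=
  curl_eq_of _ 1 8 (by norm_num) (by norm_num) (by norm_num) (by decide) (by decide)

lemma c_2_3_3_3 : curl [2, 3, 3, 3] = 3 :=
  curl_eq_of _ 3 1 (by norm_num) (by norm_num) (by norm_num) (by decide) (by decide)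

lemma c_2_3_3_3_3 : curl [2, 3, 3, 3, 3] = 4 :=
  curl_eq_of _ 4 1 (by norm_num) (by norm_num) (by norm_num) (by decide) (by decide)

lemma c_2_3_3_3_3_4 : curl [2, 3, 3, 3, 3, 4] = 1 :=
  curl_eq_of _ 1 6 (by norm_num) (by norm_num) (by norm_num) (by decide) (by decide)

lemma c_3_2_2_3 : curl [3, 2, 2, 3] = 1 :=
  curl_eq_of _ 1 4 (by norm_num) (by norm_num) (by norm_num) (by decide) (by decide)

lemma c_3_2_3_2 : curl [3, 2, 3, 2] = 2 :=
  curl_eq_of _ 2 2 (by norm_num) (by norm_num) (by norm_num) (by decide) (by decide)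

lemma c_3_2_3_2_2 : curl [3, 2, 3, 2, 2] = 2 :=
  curl_eq_of _ 2 1 (by norm_num) (by norm_num) (by norm_num) (by decide) (by decide)

lemma c_3_2_3_2_2_2 : curl [3, 2, 3, 2, 2, 2] = 3 :=
  curl_eq_of _ 3 1 (by norm_num) (by norm_num) (by norm_num) (by decide) (by decide)

lemma c_3_2_3_2_2_2_3 : curl [3, 2, 3, 2, 2, 2, 3] = 1 :=
  curl_eq_of _ 1 7 (by norm_num) (by norm_num) (by norm_num) (by decide) (by decide)

lemma c_3_2_3_3 : curl [3, 2, 3, 3] = 2 :=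
  curl_eq_of _ 2 1 (by norm_num) (by norm_num) (by norm_num) (by decide) (by decide)

lemma c_3_2_3_3_2 : curl [3, 2, 3, 3, 2] = 1 :=
  curl_eq_of _ 1 5 (by norm_num) (by norm_num) (by norm_num) (by decide) (by decide)

lemma c_3_3_2_2 : curl [3, 3, 2, 2] = 2 :=
  curl_eq_of _ 2 1 (by norm_num) (by norm_num) (by norm_num) (by decide) (by decide)

lemma c_3_3_2_2_2 : curl [3, 3, 2, 2, 2] = 3 :=
  curl_eq_of _ 3 1 (by norm_num) (by norm_num) (by norm_num) (by decide) (by decide)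

lemma c_3_3_2_2_2_3 : curl [3, 3, 2, 2, 2, 3] = 1 :=
  curl_eq_of _ 1 6 (by norm_num) (by norm_num) (by norm_num) (by decide) (by decide)

lemma c_3_3_2_3 : curl [3, 3, 2, 3] = 1 :=
  curl_eq_of _ 1 4 (by norm_num) (by norm_num) (by norm_num) (by decide) (by decide)

lemma c_3_3_3_2 : curl [3, 3, 3, 2] = 1 :=
  curl_eq_of _ 1 4 (by norm_num) (by norm_num) (by norm_num) (by decide) (by decide)

lemma it_2_0 : curlStep^[0] [2] = [2] := rfl

lemma it_3_0 : curlStep^[0] [3] = [3] := rfl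

lemma it_2_2_0 : curlStep^[0] [2, 2] = [2, 2] := rfl

lemma it_2_2_1 : curlStep^[1] [2, 2] = [2, 2, 2] := by
  rw [Function.iterate_succ_apply', it_2_2_0]
  simp only [curlStep, c_2_2]
  decide

lemma it_2_2_2 : curlStep^[2] [2, 2] = [2, 2, 2, 3] := by
  rw [Function.iterate_succ_apply', it_2_2_1]
  simp only [curlStep, c_2_2_2]
  decide

lemma it_2_3_0 : curlStep^[0] [2, 3] = [2, 3] := rfl

lemma it_3_2_0 : curlStep^[0] [3, 2] = [3, 2] := rfl

lemma it_3_3_0 : curlStep^[0] [3, 3] = [3, 3] := rfl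

lemma it_3_3_1 : curlStep^[1] [3, 3] = [3, 3, 2] := by
  rw [Function.iterate_succ_apply', it_3_3_0]
  simp only [curlStep, c_3_3]
  decide

lemma it_2_2_2_0 : curlStep^[0] [2, 2, 2] = [2, 2, 2] := rfl

lemma it_2_2_2_1 : curlStep^[1] [2, 2, 2] = [2, 2, 2, 3] := by
  rw [Function.iterate_succ_apply', it_2_2_2_0]
  simp only [curlStep, c_2_2_2]
  decide

lemma it_2_2_3_0 : curlStep^[0] [2, 2, 3] = [2, 2, 3] := rfl

lemma it_2_3_2_0 : curlStep^[0] [2, 3, 2] = [2, 3, 2] := rfl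

lemma it_2_3_3_0 : curlStep^[0] [2, 3, 3] = [2, 3, 3] := rfl

lemma it_2_3_3_1 : curlStep^[1] [2, 3, 3] = [2, 3, 3, 2] := by
  rw [Function.iterate_succ_apply', it_2_3_3_0]
  simp only [curlStep, c_2_3_3]
  decide

lemma it_3_2_2_0 : curlStep^[0] [3, 2, 2] = [3, 2, 2] := rfl

lemma it_3_2_2_1 : curlStep^[1] [3, 2, 2] = [3, 2, 2, 2] := by
  rw [Function.iterate_succ_apply', it_3_2_2_0]
  simp only [curlStep, c_3_2_2]
  decide

lemma it_3_2_2_2 : curlStep^[2] [3, 2, 2] = [3, 2, 2, 2, 3] := by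
  rw [Function.iterate_succ_apply', it_3_2_2_1]
  simp only [curlStep, c_3_2_2_2]
  decide

lemma it_3_2_3_0 : curlStep^[0] [3, 2, 3] = [3, 2, 3] := rfl

lemma it_3_3_2_0 : curlStep^[0] [3, 3, 2] = [3, 3, 2] := rfl

lemma it_3_3_3_0 : curlStep^[0] [3, 3, 3] = [3, 3, 3] := rfl

lemma it_3_3_3_1 : curlStep^[1] [3, 3, 3] = [3, 3, 3, 3] := by
  rw [Function.iterate_succ_apply', it_3_3_3_0]
  simp only [curlStep, c_3_3_3]
  decide

lemma it_3_3_3_2 : curlStep^[2] [3, 3, 3] = [3, 3, 3, 3, 4] := by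
  rw [Function.iterate_succ_apply', it_3_3_3_1]
  simp only [curlStep, c_3_3_3_3]
  decide

lemma it_2_2_2_2_0 : curlStep^[0] [2, 2, 2, 2] = [2, 2, 2, 2] := rfl

lemma it_2_2_2_2_1 : curlStep^[1] [2, 2, 2, 2] = [2, 2, 2, 2, 4] := by
  rw [Function.iterate_succ_apply', it_2_2_2_2_0]
  simp only [curlStep, c_2_2_2_2]
  decide

lemma it_2_2_2_3_0 : curlStep^[0] [2, 2, 2, 3] = [2, 2, 2, 3] := rfl

lemma it_2_2_3_2_0 : curlStep^[0] [2, 2, 3, 2] = [2, 2, 3, 2] := rfl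

lemma it_2_2_3_3_0 : curlStep^[0] [2, 2, 3, 3] = [2, 2, 3, 3] := rfl

lemma it_2_2_3_3_1 : curlStep^[1] [2, 2, 3, 3] = [2, 2, 3, 3, 2] := by
  rw [Function.iterate_succ_apply', it_2_2_3_3_0]
  simp only [curlStep, c_2_2_3_3]
  decide

lemma it_2_3_2_2_0 : curlStep^[0] [2, 3, 2, 2] = [2, 3, 2, 2] := rfl

lemma it_2_3_2_2_1 : curlStep^[1] [2, 3, 2, 2] = [2, 3, 2, 2, 2] := by
  rw [Function.iterate_succ_apply', it_2_3_2_2_0]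
  simp only [curlStep, c_2_3_2_2]
  decide

lemma it_2_3_2_2_2 : curlStep^[2] [2, 3, 2, 2] = [2, 3, 2, 2, 2, 3] := by
  rw [Function.iterate_succ_apply', it_2_3_2_2_1]
  simp only [curlStep, c_2_3_2_2_2]
  decide

lemma it_2_3_2_3_0 : curlStep^[0] [2, 3, 2, 3] = [2, 3, 2, 3] := rfl

lemma it_2_3_2_3_1 : curlStep^[1] [2, 3, 2, 3] = [2, 3, 2, 3, 2] := by
  rw [Function.iterate_succ_apply', it_2_3_2_3_0]
  simp only [curlStep, c_2_3_2_3]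
  decide

lemma it_2_3_2_3_2 : curlStep^[2] [2, 3, 2, 3] = [2, 3, 2, 3, 2, 2] := by
  rw [Function.iterate_succ_apply', it_2_3_2_3_1]
  simp only [curlStep, c_2_3_2_3_2]
  decide

lemma it_2_3_2_3_3 : curlStep^[3] [2, 3, 2, 3] = [2, 3, 2, 3, 2, 2, 2] := by
  rw [Function.iterate_succ_apply', it_2_3_2_3_2]
  simp only [curlStep, c_2_3_2_3_2_2]
  decide

lemma it_2_3_2_3_4 : curlStep^[4] [2, 3, 2, 3] = [2, 3, 2, 3, 2, 2, 2, 3] := by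
  rw [Function.iterate_succ_apply', it_2_3_2_3_3]
  simp only [curlStep, c_2_3_2_3_2_2_2]
  decide

lemma it_2_3_3_2_0 : curlStep^[0] [2, 3, 3, 2] = [2, 3, 3, 2] := rfl

lemma it_2_3_3_3_0 : curlStep^[0] [2, 3, 3, 3] = [2, 3, 3, 3] := rfl

lemma it_2_3_3_3_1 : curlStep^[1] [2, 3, 3, 3] = [2, 3, 3, 3, 3] := by
  rw [Function.iterate_succ_apply', it_2_3_3_3_0]
  simp only [curlStep, c_2_3_3_3]
  decide

lemma it_2_3_3_3_2 : curlStep^[2] [2, 3, 3, 3] = [2, 3, 3, 3, 3, 4] := by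
  rw [Function.iterate_succ_apply', it_2_3_3_3_1]
  simp only [curlStep, c_2_3_3_3_3]
  decide

lemma it_3_2_2_2_0 : curlStep^[0] [3, 2, 2, 2] = [3, 2, 2, 2] := rfl

lemma it_3_2_2_2_1 : curlStep^[1] [3, 2, 2, 2] = [3, 2, 2, 2, 3] := by
  rw [Function.iterate_succ_apply', it_3_2_2_2_0]
  simp only [curlStep, c_3_2_2_2]
  decide

lemma it_3_2_2_3_0 : curlStep^[0] [3, 2, 2, 3] = [3, 2, 2, 3] := rfl

lemma it_3_2_3_2_0 : curlStep^[0] [3, 2, 3, 2] = [3, 2, 3, 2] := rfl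

lemma it_3_2_3_2_1 : curlStep^[1] [3, 2, 3, 2] = [3, 2, 3, 2, 2] := by
  rw [Function.iterate_succ_apply', it_3_2_3_2_0]
  simp only [curlStep, c_3_2_3_2]
  decide

lemma it_3_2_3_2_2 : curlStep^[2] [3, 2, 3, 2] = [3, 2, 3, 2, 2, 2] := by
  rw [Function.iterate_succ_apply', it_3_2_3_2_1]
  simp only [curlStep, c_3_2_3_2_2]
  decide

lemma it_3_2_3_2_3 : curlStep^[3] [3, 2, 3, 2] = [3, 2, 3, 2, 2, 2, 3] := by
  rw [Function.iterate_succ_apply', it_3_2_3_2_2]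
  simp only [curlStep, c_3_2_3_2_2_2]
  decide

lemma it_3_2_3_3_0 : curlStep^[0] [3, 2, 3, 3] = [3, 2, 3, 3] := rfl

lemma it_3_2_3_3_1 : curlStep^[1] [3, 2, 3, 3] = [3, 2, 3, 3, 2] := by
  rw [Function.iterate_succ_apply', it_3_2_3_3_0]
  simp only [curlStep, c_3_2_3_3]
  decide

lemma it_3_3_2_2_0 : curlStep^[0] [3, 3, 2, 2] = [3, 3, 2, 2] := rfl

lemma it_3_3_2_2_1 : curlStep^[1] [3, 3, 2, 2] = [3, 3, 2, 2, 2] := by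
  rw [Function.iterate_succ_apply', it_3_3_2_2_0]
  simp only [curlStep, c_3_3_2_2]
  decide

lemma it_3_3_2_2_2 : curlStep^[2] [3, 3, 2, 2] = [3, 3, 2, 2, 2, 3] := by
  rw [Function.iterate_succ_apply', it_3_3_2_2_1]
  simp only [curlStep, c_3_3_2_2_2]
  decide

lemma it_3_3_2_3_0 : curlStep^[0] [3, 3, 2, 3] = [3, 3, 2, 3] := rfl

lemma it_3_3_3_2_0 : curlStep^[0] [3, 3, 3, 2] = [3, 3, 3, 2] := rfl

lemma it_3_3_3_3_0 : curlStep^[0] [3, 3, 3, 3] = [3, 3, 3, 3] := rfl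

lemma it_3_3_3_3_1 : curlStep^[1] [3, 3, 3, 3] = [3, 3, 3, 3, 4] := by
  rw [Function.iterate_succ_apply', it_3_3_3_3_0]
  simp only [curlStep, c_3_3_3_3]
  decide

lemma mu_1 : mu 1 = 1 := by
  unfold mu
  apply sSup_eq_of
  · refine ⟨[2], rfl, by decide, by norm_num, ?_, ?_⟩
    · intro i hi
      omega
    · have : (1 : ℕ) - 1 = 0 := by norm_num
      rw [this, it_2_0, c_2]
  · rintro L ⟨S, hlen, hmemS, hnL, hne, hone⟩
    obtain ⟨a, rfl⟩ := len_one hlen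
    rcases hmemS a (by simp) with rfl | rfl <;>
      first
        | (exact le_trans (L_le hne (by rw [it_2_0]; exact c_2)) (by norm_num))
        | (exact le_trans (L_le hne (by rw [it_3_0]; exact c_3)) (by norm_num))

lemma mu_2 : mu 2 = 4 := by
  unfold mu
  apply sSup_eq_of
  · refine ⟨[2, 2], rfl, by decide, by norm_num, ?_, ?_⟩
    · intro i hi
      have hi' : i < 2 := by omega
      interval_cases i
      · rw [it_2_2_0, c_2_2]; norm_num
      · rw [it_2_2_1, c_2_2_2]; norm_num
    · have : (4 : ℕ) - 2 = 2 := by norm_num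
      rw [this, it_2_2_2, c_2_2_2_3]
  · rintro L ⟨S, hlen, hmemS, hnL, hne, hone⟩
    obtain ⟨a, b, rfl⟩ := List.length_eq_two.1 hlen
    rcases hmemS a (by simp) with rfl | rfl <;> rcases hmemS b (by simp) with rfl | rfl <;>
      first
        | (exact le_trans (L_le hne (by rw [it_2_2_2]; exact c_2_2_2_3)) (by norm_num))
        | (exact le_trans (L_le hne (by rw [it_2_3_0]; exact c_2_3)) (by norm_num))
        | (exact le_trans (L_le hne (by rw [it_3_2_0]; exact c_3_2)) (by norm_num))
        | (exact le_trans (L_le hne (by rw [it_3_3_1]; exact c_3_3_2)) (by norm_num))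

lemma mu_3 : mu 3 = 5 := by
  unfold mu
  apply sSup_eq_of
  · refine ⟨[3, 2, 2], rfl, by decide, by norm_num, ?_, ?_⟩
    · intro i hi
      have hi' : i < 2 := by omega
      interval_cases i
      · rw [it_3_2_2_0, c_3_2_2]; norm_num
      · rw [it_3_2_2_1, c_3_2_2_2]; norm_num
    · have : (5 : ℕ) - 3 = 2 := by norm_num
      rw [this, it_3_2_2_2, c_3_2_2_2_3]
  · rintro L ⟨S, hlen, hmemS, hnL, hne, hone⟩
    obtain ⟨a, b, c, rfl⟩ := List.length_eq_three.1 hlen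
    rcases hmemS a (by simp) with rfl | rfl <;> rcases hmemS b (by simp) with rfl | rfl <;> rcases hmemS c (by simp) with rfl | rfl <;>
      first
        | (exact le_trans (L_le hne (by rw [it_2_2_2_1]; exact c_2_2_2_3)) (by norm_num))
        | (exact le_trans (L_le hne (by rw [it_2_2_3_0]; exact c_2_2_3)) (by norm_num))
        | (exact le_trans (L_le hne (by rw [it_2_3_2_0]; exact c_2_3_2)) (by norm_num))
        | (exact le_trans (L_le hne (by rw [it_2_3_3_1]; exact c_2_3_3_2)) (by norm_num))
        | (exact le_trans (L_le hne (by rw [it_3_2_2_2]; exact c_3_2_2_2_3)) (by norm_num))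
        | (exact le_trans (L_le hne (by rw [it_3_2_3_0]; exact c_3_2_3)) (by norm_num))
        | (exact le_trans (L_le hne (by rw [it_3_3_2_0]; exact c_3_3_2)) (by norm_num))
        | (exact le_trans (L_le hne (by rw [it_3_3_3_2]; exact c_3_3_3_3_4)) (by norm_num))

lemma mu_4 : mu 4 = 8 := by
  unfold mu
  apply sSup_eq_of
  · refine ⟨[2, 3, 2, 3], rfl, by decide, by norm_num, ?_, ?_⟩
    · intro i hi
      have hi' : i < 4 := by omega
      interval_cases i
      · rw [it_2_3_2_3_0, c_2_3_2_3]; norm_num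
      · rw [it_2_3_2_3_1, c_2_3_2_3_2]; norm_num
      · rw [it_2_3_2_3_2, c_2_3_2_3_2_2]; norm_num
      · rw [it_2_3_2_3_3, c_2_3_2_3_2_2_2]; norm_num
    · have : (8 : ℕ) - 4 = 4 := by norm_num
      rw [this, it_2_3_2_3_4, c_2_3_2_3_2_2_2_3]
  · rintro L ⟨S, hlen, hmemS, hnL, hne, hone⟩
    obtain ⟨a, b, c, d, rfl⟩ := len_four hlen
    rcases hmemS a (by simp) with rfl | rfl <;> rcases hmemS b (by simp) with rfl | rfl <;> rcases hmemS c (by simp) with rfl | rfl <;> rcases hmemS d (by simp) with rfl | rfl <;>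
      first
        | (exact le_trans (L_le hne (by rw [it_2_2_2_2_1]; exact c_2_2_2_2_4)) (by norm_num))
        | (exact le_trans (L_le hne (by rw [it_2_2_2_3_0]; exact c_2_2_2_3)) (by norm_num))
        | (exact le_trans (L_le hne (by rw [it_2_2_3_2_0]; exact c_2_2_3_2)) (by norm_num))
        | (exact le_trans (L_le hne (by rw [it_2_2_3_3_1]; exact c_2_2_3_3_2)) (by norm_num))
        | (exact le_trans (L_le hne (by rw [it_2_3_2_2_2]; exact c_2_3_2_2_2_3)) (by norm_num))
        | (exact le_trans (L_le hne (by rw [it_2_3_2_3_4]; exact c_2_3_2_3_2_2_2_3)) (by norm_num))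
        | (exact le_trans (L_le hne (by rw [it_2_3_3_2_0]; exact c_2_3_3_2)) (by norm_num))
        | (exact le_trans (L_le hne (by rw [it_2_3_3_3_2]; exact c_2_3_3_3_3_4)) (by norm_num))
        | (exact le_trans (L_le hne (by rw [it_3_2_2_2_1]; exact c_3_2_2_2_3)) (by norm_num))
        | (exact le_trans (L_le hne (by rw [it_3_2_2_3_0]; exact c_3_2_2_3)) (by norm_num))
        | (exact le_trans (L_le hne (by rw [it_3_2_3_2_3]; exact c_3_2_3_2_2_2_3)) (by norm_num))
        | (exact le_trans (L_le hne (by rw [it_3_2_3_3_1]; exact c_3_2_3_3_2)) (by norm_num))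
        | (exact le_trans (L_le hne (by rw [it_3_3_2_2_2]; exact c_3_3_2_2_2_3)) (by norm_num))
        | (exact le_trans (L_le hne (by rw [it_3_3_2_3_0]; exact c_3_3_2_3)) (by norm_num))
        | (exact le_trans (L_le hne (by rw [it_3_3_3_2_0]; exact c_3_3_3_2)) (by norm_num))
        | (exact le_trans (L_le hne (by rw [it_3_3_3_3_1]; exact c_3_3_3_3_4)) (by norm_num))

theorem stmt15 : mu 1 = 1 ∧ mu 2 = 4 ∧ mu 3 = 5 ∧ mu 4 = 8 :=
  ⟨mu_1, mu_2, mu_3, mu_4⟩
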